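/- Over the max-plus semifield, for an n×n matrix A, if Tr(A) > 0 (i.e., tr(A^k) > 0 for some 1 ≤ k ≤ n), then the inequality A x ≤ x has no regular solution x. -/

import Mathlib

/-- Max-plus matrix–vector product: `(A x)_i = max_j (a_{ij} + x_j)`. -/
noncomputable def mpMulVec {n : ℕ} (A : Fin n → Fin n → EReal) (x : Fin n → EReal) :
    Fin n → EReal :=
  fun i => Finset.univ.sup fun j => A i j + x j

/-- Max-plus matrix product. -/
noncomputable def mpMul {n : ℕ} (A B : Fin n → Fin n → EReal) :
    Fin n → Fin n → EReal :=
  fun i j => Finset.univ.sup fun k => A i k + B k j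

/-- Max-plus identity matrix: `0` on the diagonal and `-∞` elsewhere. -/
noncomputable def mpId {n : ℕ} : Fin n → Fin n → EReal :=
  fun i j => if i = j then 0 else ⊥

/-- Max-plus matrix power. -/
noncomputable def mpPow {n : ℕ} (A : Fin n → Fin n → EReal) : ℕ → (Fin n → Fin n → EReal)
  | 0 => mpId
  | k + 1 => mpMul (mpPow A k) A

/-- Max-plus trace: maximum of the diagonal entries. -/
noncomputable def mpTrace {n : ℕ} (A : Fin n → Fin n → EReal) : EReal :=
  Finset.univ.sup fun i => A i i

/-- `Tr(A) = tr A ⊕ tr A² ⊕ ⋯ ⊕ tr Aⁿ`. -/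
noncomputable def mpTr {n : ℕ} (A : Fin n → Fin n → EReal) : EReal :=
  (Finset.Icc 1 n).sup fun k => mpTrace (mpPow A k)

/-- The Kleene star `A* = I ⊕ A ⊕ ⋯ ⊕ A^{n-1}`. -/
noncomputable def mpStar {n : ℕ} (A : Fin n → Fin n → EReal) :
    Fin n → Fin n → EReal :=
  fun i j => (Finset.range n).sup fun k => mpPow A k i j

private lemma pow_le_aux {n : ℕ} (A : Fin n → Fin n → EReal) (x : Fin n → ℝ)
    (h : ∀ i, mpMulVec A (fun j => (x j : EReal)) i ≤ (x i : EReal)) :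
    ∀ k i j, mpPow A k i j + (x j : EReal) ≤ (x i : EReal) := by
  intro k
  induction k with
  | zero =>
    intro i j
    simp only [mpPow, mpId]
    by_cases hij : i = j
    · subst hij; simp
    · simp [hij]
  | succ k ih =>
    intro i j
    simp only [mpPow, mpMul]
    rw [← EReal.le_sub_iff_add_le (Or.inl (EReal.coe_ne_bot _))
      (Or.inl (EReal.coe_ne_top _))]
    apply Finset.sup_le
    intro l _
    rw [EReal.le_sub_iff_add_le (Or.inl (EReal.coe_ne_bot _))
      (Or.inl (EReal.coe_ne_top _)), add_assoc]
    calc mpPow A k i l + (A l j + (x j : EReal))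
        ≤ mpPow A k i l + (x l : EReal) := by
          apply add_le_add_right
          exact le_trans (Finset.le_sup (f := fun j => A l j + (x j : EReal)) (Finset.mem_univ j)) (h l)
      _ ≤ (x i : EReal) := ih i l

/-- Max-plus: if `Tr(A) > 0`, the inequality `A x ≤ x` has no regular solution. -/
theorem stmt12 {n : ℕ} (A : Fin n → Fin n → EReal) (hTr : 0 < mpTr A) :
    ¬ ∃ x : Fin n → ℝ,
        ∀ i, mpMulVec A (fun j => (x j : EReal)) i ≤ (x i : EReal) := by
  rintro ⟨x, hx⟩
  rw [mpTr, Finset.lt_sup_iff] at hTr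
  obtain ⟨k, _, hk⟩ := hTr
  rw [mpTrace, Finset.lt_sup_iff] at hk
  obtain ⟨i, _, hi⟩ := hk
  have h := pow_le_aux A x hx k i i
  rw [← EReal.le_sub_iff_add_le (Or.inl (EReal.coe_ne_bot _))
      (Or.inl (EReal.coe_ne_top _))] at h
  rw [← EReal.coe_sub, sub_self] at h
  exact absurd h (not_le.mpr hi)
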